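/- Let D be a pretriangulated category and N a triangulated subcategory. The localization D/N := D[Σ(N)⁻¹] of D at the class Σ(N) carries a pretriangulated structure in which the shift functor is induced by the shift of D and a triangle is distinguished if and only if it is isomorphic to the image under the quotient functor Q : D → D/N of a distinguished triangle of D; with this structure Q is an exact (triangulated) functor. Moreover, if D satisfies the octahedral axiom (is triangulated), then so does D/N. -/

import Mathlib

open CategoryTheory Limits Pretriangulated

universe v u

namespace CategoryTheory.Triangulated

structure Subcategory (C : Type*) [Category C] [HasZeroObject C] [HasShift C ℤ]
    [Preadditive C] [∀ (n : ℤ), (shiftFunctor C n).Additive] [Pretriangulated C] where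
  P : C → Prop
  zero' : ∃ (Z : C) (_ : IsZero Z), P Z
  shift (X : C) (n : ℤ) : P X → P (X⟦n⟧)
  ext₂' (T : Triangle C) (_ : T ∈ distTriang C) : P T.obj₁ → P T.obj₃ →
    ∃ (Y : C) (_ : P Y), Nonempty (T.obj₂ ≅ Y)

def Subcategory.W {C : Type*} [Category C] [HasZeroObject C] [HasShift C ℤ]
    [Preadditive C] [∀ (n : ℤ), (shiftFunctor C n).Additive] [Pretriangulated C]
    (S : Subcategory C) : MorphismProperty C :=
  fun X Y f => ∃ (Z : C) (g : Y ⟶ Z) (h : Z ⟶ X⟦(1 : ℤ)⟧)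
    (_ : Triangle.mk f g h ∈ distTriang C), S.P Z

instance Subcategory.W_isCompatibleWithShift {C : Type*} [Category C] [HasZeroObject C]
    [HasShift C ℤ] [Preadditive C] [∀ (n : ℤ), (shiftFunctor C n).Additive] [Pretriangulated C]
    (S : Subcategory C) : S.W.IsCompatibleWithShift ℤ := by
  have : ObjectProperty.IsStableUnderShift (C := C) S.P ℤ :=
    ⟨fun a => ⟨fun X hX => S.shift X a hX⟩⟩
  exact (inferInstance : (ObjectProperty.trW (C := C) S.P).IsCompatibleWithShift ℤ)

end CategoryTheory.Triangulated

namespace CategoryTheory.Triangulated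

lemma Subcategory.W.mk {C : Type*} [Category C] [HasZeroObject C] [HasShift C ℤ]
    [Preadditive C] [∀ (n : ℤ), (shiftFunctor C n).Additive] [Pretriangulated C]
    (S : Subcategory C) {T : Triangle C} (hT : T ∈ distTriang C) (h : S.P T.obj₃) :
    S.W T.mor₁ :=
  ⟨_, _, _, hT, h⟩

lemma Subcategory.W.mk' {C : Type*} [Category C] [HasZeroObject C] [HasShift C ℤ]
    [Preadditive C] [∀ (n : ℤ), (shiftFunctor C n).Additive] [Pretriangulated C]
    (S : Subcategory C) {T : Triangle C} (hT : T ∈ distTriang C) (h : S.P T.obj₁) :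
    S.W T.mor₂ :=
  ⟨_, _, _, rot_of_distTriang _ hT, S.shift _ 1 h⟩

lemma Subcategory.W_iff' {C : Type*} [Category C] [HasZeroObject C] [HasShift C ℤ]
    [Preadditive C] [∀ (n : ℤ), (shiftFunctor C n).Additive] [Pretriangulated C]
    (S : Subcategory C) {X Y : C} (f : X ⟶ Y) :
    S.W f ↔ ∃ (X₀ : C) (v : X₀ ⟶ X) (h' : Y ⟶ X₀⟦(1 : ℤ)⟧)
      (_ : Triangle.mk v f h' ∈ distTriang C), S.P X₀ := by
  constructor
  · rintro ⟨Z, g, h, H, mem⟩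
    exact ⟨_, _, _, inv_rot_of_distTriang _ H, S.shift _ _ mem⟩
  · rintro ⟨X₀, v, h', H, mem⟩
    exact ⟨_, _, _, rot_of_distTriang _ H, S.shift _ _ mem⟩

end CategoryTheory.Triangulated

namespace VerdierQuotientProof

open CategoryTheory.Category

variable {C : Type u} [Category.{v} C]

/-- The multiplicative closure of a class of morphisms. -/
inductive MClos (W : MorphismProperty C) : ∀ (X Y : C), (X ⟶ Y) → Prop
  | of {X Y : C} (f : X ⟶ Y) (hf : W f) : MClos W X Y f
  | id (X : C) : MClos W X X (𝟙 X)
  | comp {X Y Z : C} (f : X ⟶ Y) (g : Y ⟶ Z) :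
      MClos W X Y f → MClos W Y Z g → MClos W X Z (f ≫ g)

/-- The multiplicative closure, as a `MorphismProperty`. -/
def mclos (W : MorphismProperty C) : MorphismProperty C := fun X Y f => MClos W X Y f

instance (W : MorphismProperty C) : (mclos W).IsMultiplicative where
  id_mem X := MClos.id X
  comp_mem f g hf hg := MClos.comp f g hf hg

lemma mclos_isInvertedBy (W : MorphismProperty C) {D : Type*} [Category D] (L : C ⥤ D)
    (hL : W.IsInvertedBy L) : (mclos W).IsInvertedBy L := by
  intro X Y f hf
  induction hf with
  | of f hf => exact hL f hf
  | id X => rw [L.map_id]; infer_instance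
  | comp f g _ _ ihf ihg =>
      rw [L.map_comp]
      exact @IsIso.comp_isIso _ _ _ _ _ _ _ ihf ihg

/-- The universal property of `W.Q` holds also with respect to the multiplicative
closure of `W`. -/
noncomputable def strictUniversalPropertyFixedTargetQMclos (W : MorphismProperty C)
    (E : Type*) [Category E] :
    Localization.StrictUniversalPropertyFixedTarget W.Q (mclos W) E where
  inverts := mclos_isInvertedBy W W.Q W.Q_inverts
  lift F hF := Localization.Construction.lift F (fun _ _ f hf => hF f (MClos.of f hf))
  fac F hF := Localization.Construction.fac F _
  uniq := Localization.Construction.uniq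

instance mclos_isLocalization (W : MorphismProperty C) : W.Q.IsLocalization (mclos W) :=
  Functor.IsLocalization.mk' _ _ (strictUniversalPropertyFixedTargetQMclos W _)
    (strictUniversalPropertyFixedTargetQMclos W _)

section Triangulated

variable [HasZeroObject C] [HasShift C ℤ] [Preadditive C]
  [∀ n : ℤ, (shiftFunctor C n).Additive] [Pretriangulated C]
  (S : Triangulated.Subcategory C)

lemma ore_left :
    ∀ ⦃Z X : C⦄ (s : Z ⟶ X), MClos S.W Z X s → ∀ (Y : C) (f : Z ⟶ Y),
      ∃ (Y' : C) (g : X ⟶ Y') (t : Y ⟶ Y'), MClos S.W Y Y' t ∧ s ≫ g = f ≫ t := by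
  intro Z X s hs
  induction hs with
  | of u hu =>
      intro Y f
      obtain ⟨Z₀, p, q, H, mem⟩ := hu
      obtain ⟨Y', fY, gY, mem'⟩ :=
        Pretriangulated.distinguished_cocone_triangle₂ (q ≫ f⟦(1 : ℤ)⟧')
      obtain ⟨b, hb₁, -⟩ := Pretriangulated.complete_distinguished_triangle_morphism₂
        (Triangle.mk u p q) (Triangle.mk fY gY (q ≫ f⟦(1 : ℤ)⟧')) H mem' f (𝟙 Z₀) (by exact (Category.id_comp _).symm)
      exact ⟨Y', b, fY, MClos.of _ (Triangulated.Subcategory.W.mk S mem' mem), hb₁⟩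
  | id X =>
      intro Y f
      exact ⟨Y, f, 𝟙 Y, MClos.id Y, by simp⟩
  | comp f g _ _ ihf ihg =>
      intro Y h
      obtain ⟨Y₁, g₁, t₁, ht₁, e₁⟩ := ihf Y h
      obtain ⟨Y₂, g₂, t₂, ht₂, e₂⟩ := ihg Y₁ g₁
      exact ⟨Y₂, g₂, t₁ ≫ t₂, MClos.comp _ _ ht₁ ht₂,
        by rw [assoc, e₂, ← assoc, e₁, assoc]⟩

lemma ore_right :
    ∀ ⦃Z₁ Z₂ : C⦄ (s : Z₁ ⟶ Z₂), MClos S.W Z₁ Z₂ s → ∀ (Y : C) (f : Y ⟶ Z₂),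
      ∃ (Y' : C) (g : Y' ⟶ Z₁) (t : Y' ⟶ Y), MClos S.W Y' Y t ∧ g ≫ s = t ≫ f := by
  intro Z₁ Z₂ s hs
  induction hs with
  | of u hu =>
      intro Y f
      obtain ⟨Z₀, p, q, H, mem⟩ := hu
      obtain ⟨Y', t, h', mem'⟩ := Pretriangulated.distinguished_cocone_triangle₁ (f ≫ p)
      obtain ⟨g, hg₁, -⟩ := Pretriangulated.complete_distinguished_triangle_morphism₁
        (Triangle.mk t (f ≫ p) h') (Triangle.mk u p q) mem' H f (𝟙 Z₀) (by exact Category.comp_id _)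
      exact ⟨Y', g, t, MClos.of _ (Triangulated.Subcategory.W.mk S mem' mem), hg₁.symm⟩
  | id X =>
      intro Y f
      exact ⟨Y, f, 𝟙 Y, MClos.id Y, by simp⟩
  | comp f g _ _ ihf ihg =>
      intro Y h
      obtain ⟨Y₂, g₂, t₂, ht₂, e₂⟩ := ihg Y h
      obtain ⟨Y₁, g₁, t₁, ht₁, e₁⟩ := ihf Y₂ g₂
      exact ⟨Y₁, g₁, t₁ ≫ t₂, MClos.comp _ _ ht₁ ht₂,
        by rw [← assoc, e₁, assoc, e₂, assoc]⟩

lemma ore_ext_left :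
    ∀ ⦃Z X : C⦄ (s : Z ⟶ X), MClos S.W Z X s → ∀ (Y : C) (f₁ f₂ : X ⟶ Y),
      s ≫ f₁ = s ≫ f₂ →
      ∃ (Y' : C) (t : Y ⟶ Y'), MClos S.W Y Y' t ∧ f₁ ≫ t = f₂ ≫ t := by
  intro Z X s hs
  induction hs with
  | of u hu =>
      intro Y f₁ f₂ heq
      obtain ⟨Z₀, p, q, H, mem⟩ := hu
      have h0 : u ≫ (f₁ - f₂) = 0 := by rw [Preadditive.comp_sub, heq, sub_self]
      obtain ⟨q', hq'⟩ := Triangle.yoneda_exact₂ _ H (f₁ - f₂) h0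
      obtain ⟨Y', r, tt, mem'⟩ := Pretriangulated.distinguished_cocone_triangle q'
      refine ⟨Y', r, MClos.of _ (Triangulated.Subcategory.W.mk' S mem' mem), ?_⟩
      have z : q' ≫ r = 0 := comp_distTriang_mor_zero₁₂ _ mem'
      have : (f₁ - f₂) ≫ r = 0 := 
        (eq_whisker hq' r).trans ((assoc _ _ _).trans ((whisker_eq _ z).trans comp_zero))
      rw [← sub_eq_zero, ← Preadditive.sub_comp]
      exact this
  | id X =>
      intro Y f₁ f₂ heq
      refine ⟨Y, 𝟙 Y, MClos.id Y, ?_⟩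
      simpa using heq
  | comp f g _ _ ihf ihg =>
      intro Y f₁ f₂ heq
      obtain ⟨Y₁, t₁, ht₁, e₁⟩ := ihf Y (g ≫ f₁) (g ≫ f₂)
        (by rw [← assoc, ← assoc]; exact heq)
      obtain ⟨Y₂, t₂, ht₂, e₂⟩ := ihg Y₁ (f₁ ≫ t₁) (f₂ ≫ t₁)
        (by rw [← assoc, ← assoc]; exact e₁)
      exact ⟨Y₂, t₁ ≫ t₂, MClos.comp _ _ ht₁ ht₂,
        by rw [← assoc, ← assoc]; exact e₂⟩

lemma ore_ext_right :
    ∀ ⦃X Z : C⦄ (s : X ⟶ Z), MClos S.W X Z s → ∀ (Y : C) (f₁ f₂ : Y ⟶ X),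
      f₁ ≫ s = f₂ ≫ s →
      ∃ (Y₀ : C) (t : Y₀ ⟶ Y), MClos S.W Y₀ Y t ∧ t ≫ f₁ = t ≫ f₂ := by
  intro X Z s hs
  induction hs with
  | of u hu =>
      intro Y f₁ f₂ heq
      rw [S.W_iff'] at hu
      obtain ⟨X₀, v, h', H, mem⟩ := hu
      have h0 : (f₁ - f₂) ≫ u = 0 := by rw [Preadditive.sub_comp, heq, sub_self]
      obtain ⟨q', hq'⟩ := Triangle.coyoneda_exact₂ _ H (f₁ - f₂) h0
      obtain ⟨Y₀, t, h'', mem'⟩ := Pretriangulated.distinguished_cocone_triangle₁ q'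
      refine ⟨Y₀, t, MClos.of _ (Triangulated.Subcategory.W.mk S mem' mem), ?_⟩
      have z : t ≫ q' = 0 := comp_distTriang_mor_zero₁₂ _ mem'
      have : t ≫ (f₁ - f₂) = 0 := 
        (whisker_eq t hq').trans ((assoc _ _ _).symm.trans ((eq_whisker z _).trans zero_comp))
      rw [← sub_eq_zero, ← Preadditive.comp_sub]
      exact this
  | id X =>
      intro Y f₁ f₂ heq
      refine ⟨Y, 𝟙 Y, MClos.id Y, ?_⟩
      simpa using heq
  | comp f g _ _ ihf ihg =>
      intro Y f₁ f₂ heq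
      obtain ⟨Y₁, t₁, ht₁, e₁⟩ := ihg Y (f₁ ≫ f) (f₂ ≫ f)
        (by rw [assoc, assoc]; exact heq)
      obtain ⟨Y₂, t₂, ht₂, e₂⟩ := ihf Y₁ (t₁ ≫ f₁) (t₁ ≫ f₂)
        (by rw [assoc, assoc]; exact e₁)
      exact ⟨Y₂, t₂ ≫ t₁, MClos.comp _ _ ht₂ ht₁,
        by rw [assoc, assoc]; exact e₂⟩

instance : (mclos S.W).HasLeftCalculusOfFractions where
  exists_leftFraction X Y φ := by
    obtain ⟨Y', g, t, ht, e⟩ := ore_left S φ.s φ.hs Y φ.f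
    exact ⟨MorphismProperty.LeftFraction.mk g t ht, e.symm⟩
  ext X' X Y f₁ f₂ s hs h := by
    obtain ⟨Y', t, ht, e⟩ := ore_ext_left S s hs Y f₁ f₂ h
    exact ⟨Y', t, ht, e⟩

instance : (mclos S.W).HasRightCalculusOfFractions where
  exists_rightFraction X Y φ := by
    obtain ⟨Y', g, t, ht, e⟩ := ore_right S φ.s φ.hs X φ.f
    exact ⟨MorphismProperty.RightFraction.mk t ht g, e.symm⟩
  ext X Y Y' f₁ f₂ s hs h := by
    obtain ⟨Y₀, t, ht, e⟩ := ore_ext_right S s hs X f₁ f₂ h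
    exact ⟨Y₀, t, ht, e⟩

noncomputable instance locPreadditive : Preadditive S.W.Localization :=
  Localization.preadditive S.W.Q (mclos S.W)

instance locQAdditive : S.W.Q.Additive :=
  Localization.functor_additive S.W.Q (mclos S.W)

instance locHasZeroObject : HasZeroObject S.W.Localization :=
  S.W.Q.hasZeroObject_of_additive

instance locShiftAdditive (n : ℤ) : (shiftFunctor S.W.Localization n).Additive := by
  rw [Localization.functor_additive_iff S.W.Q (mclos S.W)]
  exact Functor.additive_of_iso (S.W.Q.commShiftIso n)

/-- Exactness of `Hom(M, Q(-))` on distinguished triangles of `C`. -/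
lemma exact₂_loc (T : Triangle C) (hT : T ∈ distTriang C) {M : S.W.Localization}
    (g : M ⟶ S.W.Q.obj T.obj₂) (hg : g ≫ S.W.Q.map T.mor₂ = 0) :
    ∃ h : M ⟶ S.W.Q.obj T.obj₁, g = h ≫ S.W.Q.map T.mor₁ := by
  have hES := Localization.essSurj S.W.Q (mclos S.W)
  let e : S.W.Q.obj (S.W.Q.objPreimage M) ≅ M := S.W.Q.objObjPreimageIso M
  obtain ⟨φ, hφ⟩ := Localization.exists_rightFraction S.W.Q (mclos S.W) (e.hom ≫ g)
  have hφs := Localization.inverts S.W.Q (mclos S.W) φ.s φ.hs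
  have key : S.W.Q.map (φ.f ≫ T.mor₂) = S.W.Q.map 0 := by
    rw [Functor.map_comp, Functor.map_zero,
      ← MorphismProperty.RightFraction.map_s_comp_map φ S.W.Q
        (Localization.inverts S.W.Q (mclos S.W)), ← hφ]
    simp only [assoc]
    rw [hg, comp_zero, comp_zero]
  rw [MorphismProperty.map_eq_iff_precomp S.W.Q (mclos S.W)] at key
  obtain ⟨X₀, s, hs, fac⟩ := key
  rw [comp_zero] at fac
  obtain ⟨ψ, hψ⟩ := Triangle.coyoneda_exact₂ T hT (s ≫ φ.f) (by rw [assoc, fac])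
  have hQs := Localization.inverts S.W.Q (mclos S.W) s hs
  refine ⟨e.inv ≫ inv (S.W.Q.map φ.s) ≫ inv (S.W.Q.map s) ≫ S.W.Q.map ψ, ?_⟩
  have h1 : S.W.Q.map ψ ≫ S.W.Q.map T.mor₁ = S.W.Q.map s ≫ S.W.Q.map φ.f := by
    rw [← Functor.map_comp, ← hψ, Functor.map_comp]
  have h3 : inv (S.W.Q.map φ.s) ≫ S.W.Q.map φ.f = e.hom ≫ g := by
    rw [← MorphismProperty.RightFraction.map_s_comp_map φ S.W.Q
      (Localization.inverts S.W.Q (mclos S.W)), IsIso.inv_hom_id_assoc, hφ]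
  simp only [assoc]
  rw [h1, IsIso.inv_hom_id_assoc, h3, Iso.inv_hom_id_assoc]

/-- The key "five lemma" in the localized category: the image under `Q` of the third
component of a morphism of distinguished triangles is invertible provided the images of
the first two components are. -/
lemma isIso_Qmap_hom₃ {T₁ T₂ : Triangle C} (hT₁ : T₁ ∈ distTriang C)
    (hT₂ : T₂ ∈ distTriang C) (φ : T₁ ⟶ T₂) (h₁ : IsIso (S.W.Q.map φ.hom₁))
    (h₂ : IsIso (S.W.Q.map φ.hom₂)) : IsIso (S.W.Q.map φ.hom₃) := by
  have h₁' : IsIso (S.W.Q.map (φ.hom₁⟦(1 : ℤ)⟧')) := by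
    have : IsIso ((S.W.Q ⋙ shiftFunctor S.W.Localization (1 : ℤ)).map φ.hom₁) := by
      dsimp only [Functor.comp_map]
      infer_instance
    exact (NatIso.isIso_map_iff (S.W.Q.commShiftIso (1 : ℤ)) φ.hom₁).2 this
  have h₂' : IsIso (S.W.Q.map (φ.hom₂⟦(1 : ℤ)⟧')) := by
    have : IsIso ((S.W.Q ⋙ shiftFunctor S.W.Localization (1 : ℤ)).map φ.hom₂) := by
      dsimp only [Functor.comp_map]
      infer_instance
    exact (NatIso.isIso_map_iff (S.W.Q.commShiftIso (1 : ℤ)) φ.hom₂).2 this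
  have z12 : S.W.Q.map T₁.mor₁ ≫ S.W.Q.map T₁.mor₂ = 0 := by
    rw [← Functor.map_comp, comp_distTriang_mor_zero₁₂ _ hT₁, Functor.map_zero]
  have z31 : S.W.Q.map T₂.mor₃ ≫ S.W.Q.map (T₂.mor₁⟦(1 : ℤ)⟧') = 0 := by
    rw [← Functor.map_comp, comp_distTriang_mor_zero₃₁ _ hT₂, Functor.map_zero]
  apply isIso_of_yoneda_map_bijective
  intro M
  constructor
  · -- injectivity
    intro x y hxy
    have hxy' : x ≫ S.W.Q.map φ.hom₃ = y ≫ S.W.Q.map φ.hom₃ := hxy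
    rw [← sub_eq_zero]
    have hg : (x - y) ≫ S.W.Q.map φ.hom₃ = 0 := by
      rw [Preadditive.sub_comp, hxy', sub_self]
    set g : M ⟶ S.W.Q.obj T₁.obj₃ := x - y with hgdef
    have e4 : g ≫ S.W.Q.map T₁.mor₃ = 0 := by
      rw [← cancel_mono (S.W.Q.map (φ.hom₁⟦(1 : ℤ)⟧')), zero_comp, assoc,
        ← S.W.Q.map_comp, φ.comm₃, S.W.Q.map_comp, ← assoc, hg, zero_comp]
    obtain ⟨h₀, hh⟩ := exact₂_loc S T₁.rotate (rot_of_distTriang _ hT₁) g e4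
    let h : M ⟶ S.W.Q.obj T₁.obj₂ := h₀
    have hh' : g = h ≫ S.W.Q.map T₁.mor₂ := hh
    have e5 : (h ≫ S.W.Q.map φ.hom₂) ≫ S.W.Q.map T₂.mor₂ = 0 := by
      rw [assoc, ← S.W.Q.map_comp, ← φ.comm₂, S.W.Q.map_comp, ← assoc, ← hh', hg]
    obtain ⟨k, hk⟩ := exact₂_loc S T₂ hT₂ (h ≫ S.W.Q.map φ.hom₂) e5
    have hk' : h = (k ≫ inv (S.W.Q.map φ.hom₁)) ≫ S.W.Q.map T₁.mor₁ := by
      rw [← cancel_mono (S.W.Q.map φ.hom₂), hk, assoc, assoc, ← S.W.Q.map_comp,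
        φ.comm₁, S.W.Q.map_comp, IsIso.inv_hom_id_assoc]
    rw [hh', hk', assoc, z12, comp_zero]
  · -- surjectivity
    intro g'
    set p : M ⟶ S.W.Q.obj (T₁.obj₁⟦(1 : ℤ)⟧) :=
      g' ≫ S.W.Q.map T₂.mor₃ ≫ inv (S.W.Q.map (φ.hom₁⟦(1 : ℤ)⟧')) with hpdef
    have sc₁ : S.W.Q.map (T₁.mor₁⟦(1 : ℤ)⟧') ≫ S.W.Q.map (φ.hom₂⟦(1 : ℤ)⟧') =
        S.W.Q.map (φ.hom₁⟦(1 : ℤ)⟧') ≫ S.W.Q.map (T₂.mor₁⟦(1 : ℤ)⟧') := by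
      rw [← S.W.Q.map_comp, ← S.W.Q.map_comp, ← Functor.map_comp, ← Functor.map_comp,
        φ.comm₁]
    have hp : p ≫ S.W.Q.map (T₁.mor₁⟦(1 : ℤ)⟧') = 0 := by
      have aux : inv (S.W.Q.map (φ.hom₁⟦(1 : ℤ)⟧')) ≫ S.W.Q.map (T₁.mor₁⟦(1 : ℤ)⟧') =
          S.W.Q.map (T₂.mor₁⟦(1 : ℤ)⟧') ≫ inv (S.W.Q.map (φ.hom₂⟦(1 : ℤ)⟧')) := by
        rw [IsIso.inv_comp_eq, ← assoc, IsIso.eq_comp_inv]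
        exact sc₁
      rw [hpdef, assoc, assoc, aux, ← assoc (S.W.Q.map T₂.mor₃), z31]
      simp
    have hp2 : p ≫ S.W.Q.map (T₁.rotate.rotate.mor₂) = 0 := by
      dsimp only [Triangle.rotate, Triangle.mk]
      rw [Functor.map_neg, Preadditive.comp_neg, hp, neg_zero]
      exact rfl
    obtain ⟨q', hq⟩ := exact₂_loc S T₁.rotate.rotate
      (rot_of_distTriang _ (rot_of_distTriang _ hT₁)) p hp2
    let q : M ⟶ S.W.Q.obj T₁.obj₃ := q'
    have hq' : p = q ≫ S.W.Q.map T₁.mor₃ := hq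
    have e6 : ((q ≫ S.W.Q.map φ.hom₃) - g') ≫ S.W.Q.map T₂.mor₃ = 0 := by
      rw [Preadditive.sub_comp, assoc, ← S.W.Q.map_comp, ← φ.comm₃, S.W.Q.map_comp,
        ← assoc, ← hq', hpdef, assoc, assoc, IsIso.inv_hom_id, comp_id, sub_self]
    obtain ⟨r', hr⟩ := exact₂_loc S T₂.rotate (rot_of_distTriang _ hT₂)
      ((q ≫ S.W.Q.map φ.hom₃) - g') e6
    let r : M ⟶ S.W.Q.obj T₂.obj₂ := r'
    have hr' : (q ≫ S.W.Q.map φ.hom₃) - g' = r ≫ S.W.Q.map T₂.mor₂ := hr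
    refine ⟨q - (r ≫ inv (S.W.Q.map φ.hom₂)) ≫ S.W.Q.map T₁.mor₂, ?_⟩
    show (q - (r ≫ inv (S.W.Q.map φ.hom₂)) ≫ S.W.Q.map T₁.mor₂) ≫ S.W.Q.map φ.hom₃ = g'
    rw [Preadditive.sub_comp, assoc, assoc, ← S.W.Q.map_comp, φ.comm₂,
      S.W.Q.map_comp, IsIso.inv_hom_id_assoc, ← hr']
    abel

/-- TR3 for images of distinguished triangles in the localized category. -/
lemma completion_aux (T₁ T₂ : Triangle C) (hT₁ : T₁ ∈ distTriang C)
    (hT₂ : T₂ ∈ distTriang C)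
    (a : S.W.Q.obj T₁.obj₁ ⟶ S.W.Q.obj T₂.obj₁) (b : S.W.Q.obj T₁.obj₂ ⟶ S.W.Q.obj T₂.obj₂)
    (fac : S.W.Q.map T₁.mor₁ ≫ b = a ≫ S.W.Q.map T₂.mor₁) :
    ∃ (φ : S.W.Q.mapTriangle.obj T₁ ⟶ S.W.Q.mapTriangle.obj T₂),
      φ.hom₁ = a ∧ φ.hom₂ = b := by
  obtain ⟨α, hα⟩ := Localization.exists_leftFraction S.W.Q (mclos S.W) a
  obtain ⟨β, hβ⟩ := (MorphismProperty.RightFraction.mk α.s α.hs T₂.mor₁).exists_leftFraction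
  obtain ⟨γ, hγ⟩ := Localization.exists_leftFraction S.W.Q (mclos S.W) (b ≫ S.W.Q.map β.s)
  have := Localization.inverts S.W.Q (mclos S.W) β.s β.hs
  have := Localization.inverts S.W.Q (mclos S.W) γ.s γ.hs
  dsimp at hβ
  obtain ⟨Z₂, σ, hσ, fac'⟩ := (MorphismProperty.map_eq_iff_postcomp S.W.Q (mclos S.W)
    (α.f ≫ β.f ≫ γ.s) (T₁.mor₁ ≫ γ.f)).1 (by
      rw [← cancel_mono (S.W.Q.map β.s), assoc, assoc, hγ,
        ← cancel_mono (S.W.Q.map γ.s), assoc, assoc, assoc, hα,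
        MorphismProperty.LeftFraction.map_comp_map_s, ← Functor.map_comp] at fac
      rw [fac, ← Functor.map_comp_assoc, hβ, Functor.map_comp, Functor.map_comp,
        Functor.map_comp, assoc, MorphismProperty.LeftFraction.map_comp_map_s_assoc])
  simp only [assoc] at fac'
  obtain ⟨Y₃, g, h, hT₃⟩ := Pretriangulated.distinguished_cocone_triangle (β.f ≫ γ.s ≫ σ)
  let T₃ := Triangle.mk (β.f ≫ γ.s ≫ σ) g h
  change T₃ ∈ distTriang C at hT₃
  have hβγσ : MClos S.W _ _ (β.s ≫ γ.s ≫ σ) := MClos.comp _ _ β.hs (MClos.comp _ _ γ.hs hσ)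
  obtain ⟨ψ₃, hψ₁, hψ₂⟩ := Pretriangulated.complete_distinguished_triangle_morphism
    T₂ T₃ hT₂ hT₃ α.s (β.s ≫ γ.s ≫ σ) (by dsimp [T₃]; rw [reassoc_of% hβ]; rfl)
  let ψ : T₂ ⟶ T₃ := Triangle.homMk _ _ α.s (β.s ≫ γ.s ≫ σ) ψ₃
    (by dsimp [T₃]; rw [reassoc_of% hβ]; rfl) hψ₁ hψ₂
  have : IsIso (S.W.Q.mapTriangle.map ψ) := Triangle.isIso_of_isIsos _
    (Localization.inverts S.W.Q (mclos S.W) α.s α.hs)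
    (Localization.inverts S.W.Q (mclos S.W) _ hβγσ)
    (isIso_Qmap_hom₃ S hT₂ hT₃ ψ
      (Localization.inverts S.W.Q (mclos S.W) α.s α.hs)
      (Localization.inverts S.W.Q (mclos S.W) _ hβγσ))
  refine ⟨S.W.Q.mapTriangle.map (Pretriangulated.completeDistinguishedTriangleMorphism
      T₁ T₃ hT₁ hT₃ α.f (γ.f ≫ σ) fac'.symm) ≫ inv (S.W.Q.mapTriangle.map ψ), ?_, ?_⟩
  · apply (cancel_mono (S.W.Q.mapTriangle.map ψ).hom₁).1
    simp only [← comp_hom₁, assoc, IsIso.inv_hom_id, comp_id]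
    show S.W.Q.map α.f = a ≫ S.W.Q.map α.s
    rw [hα, MorphismProperty.LeftFraction.map_comp_map_s]
  · apply (cancel_mono (S.W.Q.mapTriangle.map ψ).hom₂).1
    simp only [← comp_hom₂, assoc, IsIso.inv_hom_id, comp_id]
    show S.W.Q.map (γ.f ≫ σ) = b ≫ S.W.Q.map (β.s ≫ γ.s ≫ σ)
    simp only [Functor.map_comp, reassoc_of% hγ,
      MorphismProperty.LeftFraction.map_comp_map_s_assoc]

noncomputable instance locPretriangulated : Pretriangulated S.W.Localization where
  distinguishedTriangles := S.W.Q.essImageDistTriang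
  isomorphic_distinguished _ hT₁ _ e := S.W.Q.essImageDistTriang_mem_of_iso e hT₁
  contractible_distinguished X := by
    have := Localization.essSurj S.W.Q (mclos S.W)
    exact S.W.Q.contractible_mem_essImageDistTriang X
  distinguished_cocone_triangle f :=
    Triangulated.Localization.distinguished_cocone_triangle S.W.Q (mclos S.W) f
  rotate_distinguished_triangle T := S.W.Q.rotate_essImageDistTriang T
  complete_distinguished_triangle_morphism T₁ T₂ hT₁ hT₂ a b fac := by
    refine S.W.Q.complete_distinguished_essImageDistTriang_morphism ?_ T₁ T₂ hT₁ hT₂ a b fac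
    intro T₁' T₂' hT₁' hT₂' a' b' fac'
    exact completion_aux S T₁' T₂' hT₁' hT₂' a' b' fac'

instance locQIsTriangulated : S.W.Q.IsTriangulated :=
  ⟨fun T hT => ⟨T, Iso.refl _, hT⟩⟩

lemma locIsTriangulated [IsTriangulated C] : IsTriangulated S.W.Localization :=
  Triangulated.Localization.isTriangulated S.W.Q (mclos S.W)

end Triangulated

end VerdierQuotientProof

/-- Auxiliary `Prop` expressing, for a given pretriangulated structure on the Verdier
quotient `D/N = D[Σ(N)⁻¹]` (i.e. on `N.W.Localization`), that: the quotient functor `Q`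
is additive; a triangle in the quotient is distinguished iff it is isomorphic to the
image under `Q` of a distinguished triangle of `D`; `Q` is an exact (triangulated)
functor; and if `D` satisfies the octahedral axiom then so does `D/N`. -/
def VerdierQuotientSpec (D : Type u) [Category.{v} D] [HasZeroObject D] [HasShift D ℤ]
    [Preadditive D] [∀ n : ℤ, (shiftFunctor D n).Additive] [Pretriangulated D]
    (N : Triangulated.Subcategory D)
    [Preadditive N.W.Localization] [HasZeroObject N.W.Localization]
    [∀ n : ℤ, (shiftFunctor N.W.Localization n).Additive]
    [Pretriangulated N.W.Localization] : Prop :=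
  N.W.Q.Additive ∧
  (∀ T : Triangle N.W.Localization,
      (T ∈ distTriang N.W.Localization) ↔ T ∈ N.W.Q.essImageDistTriang) ∧
  N.W.Q.IsTriangulated ∧
  (IsTriangulated D → IsTriangulated N.W.Localization)

/-- Let `D` be a pretriangulated category and `N` a triangulated
subcategory. The localization `D/N := D[Σ(N)⁻¹]` carries a pretriangulated structure,
for the shift induced by the shift of `D`, in which a triangle is distinguished iff it
is isomorphic to the image under the quotient functor `Q : D ⟶ D/N` of a distinguished
triangle of `D`; with this structure `Q` is exact, and if `D` is triangulated
(satisfies the octahedral axiom) then so is `D/N`. -/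
theorem verdierQuotient_pretriangulated (D : Type u) [Category.{v} D] [HasZeroObject D]
    [HasShift D ℤ] [Preadditive D] [∀ n : ℤ, (shiftFunctor D n).Additive]
    [Pretriangulated D] (N : Triangulated.Subcategory D) :
    ∃ (P : Preadditive N.W.Localization) (Z : HasZeroObject N.W.Localization)
      (A : ∀ n : ℤ, @Functor.Additive _ _ _ _ P P (shiftFunctor N.W.Localization n))
      (hP : @Pretriangulated N.W.Localization _ Z _ P A),
      @VerdierQuotientSpec D _ _ _ _ _ _ N P Z A hP := by
  refine ⟨inferInstance, inferInstance, inferInstance, inferInstance,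
    inferInstance, fun T => Iff.rfl, inferInstance, fun h => ?_⟩
  letI := h
  exact VerdierQuotientProof.locIsTriangulated N
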